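/- Let D be an open or closed disc or half-plane. If P(λ) ∈ ℂ^{n×n}[λ] of degree d is hyperstable with respect to D, then for any scalar polynomials p₁,...,p_κ ∈ ℂ[λ] with κ ≥ d, the matrix polynomial Q(λ) = (T_κP)(p₁(λ),...,p_κ(λ)) is hyperstable with respect to E = p₁⁻¹(D) ∩ ... ∩ p_κ⁻¹(D). -/

import Mathlib

/-- `D` is an open or closed disc, or an open or closed half-plane. -/
def IsDiscOrHalfPlane (D : Set ℂ) : Prop :=
  (∃ c : ℂ, ∃ r : ℝ, 0 < r ∧ (D = Metric.ball c r ∨ D = Metric.closedBall c r)) ∨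
  (∃ w : ℂ, w ≠ 0 ∧ ∃ t : ℝ,
    D = {z : ℂ | (w * z).re < t} ∨ D = {z : ℂ | (w * z).re ≤ t})

/-- The `j`-th elementary symmetric polynomial in `κ` variables. -/
noncomputable def esymm (κ j : ℕ) (z : Fin κ → ℂ) : ℂ :=
  ∑ t ∈ Finset.univ.powersetCard j, ∏ i ∈ t, z i

/-- The polarization `T_κ P` of the matrix polynomial `P`. -/
noncomputable def polarize {n : ℕ} (κ : ℕ) (P : Matrix (Fin n) (Fin n) (Polynomial ℂ))
    (z : Fin κ → ℂ) : Matrix (Fin n) (Fin n) ℂ :=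
  ∑ j ∈ Finset.range (κ + 1),
    (((κ.choose j : ℂ))⁻¹ * esymm κ j z) • (Matrix.of fun i k => (P i k).coeff j)

/-- `P` is hyperstable with respect to `D`. -/
def Hyperstable {n : ℕ} (P : ℂ → Matrix (Fin n) (Fin n) ℂ) (D : Set ℂ) : Prop :=
  ∀ x : Fin n → ℂ, x ≠ 0 → ∃ y : Fin n → ℂ, y ≠ 0 ∧
    ∀ μ ∈ D, dotProduct (star y) ((P μ).mulVec x) ≠ 0

/-- A multivariate matrix polynomial is hyperstable with respect to `D^κ`. -/
def MultiHyperstable {n κ : ℕ} (Q : (Fin κ → ℂ) → Matrix (Fin n) (Fin n) ℂ)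
    (D : Set ℂ) : Prop :=
  ∀ x : Fin n → ℂ, x ≠ 0 → ∃ y : Fin n → ℂ, y ≠ 0 ∧
    ∀ z : Fin κ → ℂ, (∀ i, z i ∈ D) →
      dotProduct (star y) ((Q z).mulVec x) ≠ 0


open Polynomial Complex Finset

lemma esymm_zero (κ : ℕ) (z : Fin κ → ℂ) : esymm κ 0 z = 1 := by
  simp [esymm]

lemma esymm_of_lt {κ j : ℕ} (h : κ < j) (z : Fin κ → ℂ) : esymm κ j z = 0 := by
  have : (Finset.univ : Finset (Fin κ)).powersetCard j = ∅ := by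
    rw [Finset.powersetCard_eq_empty]; simpa
  simp [esymm, this]

lemma esymm_succ (κ j : ℕ) (z : Fin (κ+1) → ℂ) :
    esymm (κ+1) (j+1) z
      = esymm κ (j+1) (z ∘ Fin.castSucc) + z (Fin.last κ) * esymm κ j (z ∘ Fin.castSucc) := by
  classical
  have hu : (Finset.univ : Finset (Fin (κ+1)))
      = insert (Fin.last κ) (Finset.univ.map Fin.castSuccEmb) := by
    rw [Fin.univ_castSuccEmb]; simp [Finset.cons_eq_insert]
  have hlast : Fin.last κ ∉ (Finset.univ : Finset (Fin κ)).map Fin.castSuccEmb := by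
    simp [Fin.castSuccEmb]
    intro x; exact (Fin.castSucc_lt_last x).ne
  have hmapped : ∀ (jj : ℕ),
      ∑ t ∈ (Finset.univ.map (Fin.castSuccEmb (n := κ))).powersetCard jj, ∏ i ∈ t, z i
        = esymm κ jj (z ∘ Fin.castSucc) := by
    intro jj
    rw [Finset.powersetCard_map, Finset.sum_map]
    apply Finset.sum_congr rfl
    intro t _
    have : (Finset.mapEmbedding (Fin.castSuccEmb (n := κ))).toEmbedding t
        = t.map Fin.castSuccEmb := Finset.mapEmbedding_apply ..
    rw [this, Finset.prod_map]
    rfl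
  have hnot : ∀ t ∈ (Finset.univ.map (Fin.castSuccEmb (n := κ))).powersetCard j,
      Fin.last κ ∉ t := fun t ht hc => hlast ((Finset.mem_powersetCard.mp ht).1 hc)
  have hdisj : Disjoint
      ((Finset.univ.map (Fin.castSuccEmb (n := κ))).powersetCard (j+1))
      (((Finset.univ.map (Fin.castSuccEmb (n := κ))).powersetCard j).image
        (insert (Fin.last κ))) := by
    rw [Finset.disjoint_left]
    intro t ht hti
    obtain ⟨u, hu', rfl⟩ := Finset.mem_image.mp hti
    exact hlast ((Finset.mem_powersetCard.mp ht).1 (Finset.mem_insert_self _ _))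
  have hinj : ∀ a ∈ (Finset.univ.map (Fin.castSuccEmb (n := κ))).powersetCard j,
      ∀ b ∈ (Finset.univ.map (Fin.castSuccEmb (n := κ))).powersetCard j,
      insert (Fin.last κ) a = insert (Fin.last κ) b → a = b := by
    intro a ha b hb hab
    have ha' := hnot a ha
    have hb' := hnot b hb
    rw [← Finset.erase_insert ha', hab, Finset.erase_insert hb']
  rw [esymm, hu, Finset.powersetCard_succ_insert hlast, Finset.sum_union hdisj]
  congr 1
  · exact hmapped (j+1)
  · rw [Finset.sum_image hinj,
      Finset.sum_congr rfl (fun t ht => Finset.prod_insert (hnot t ht)),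
      ← Finset.mul_sum, hmapped j]

lemma list_sq_sum (L : List ℝ) : L.sum ^ 2 ≤ L.length * (L.map (· ^ 2)).sum := by
  induction L with
  | nil => simp
  | cons a T ih =>
    simp only [List.sum_cons, List.length_cons, List.map_cons, Nat.cast_add, Nat.cast_one]
    have hnn : (0:ℝ) ≤ (T.map (· ^ 2)).sum :=
      List.sum_nonneg (by intro x hx; obtain ⟨y, _, rfl⟩ := List.mem_map.mp hx; positivity)
    rcases eq_or_ne T [] with rfl | hne
    · simp
    · have hn1 : (1:ℝ) ≤ (T.length : ℝ) := by
        have := List.length_pos_iff.mpr hne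
        exact_mod_cast this
      have h2 : ((T.length:ℝ)+1) * T.sum^2 ≤ ((T.length:ℝ)+1) *
          ((T.length:ℝ) * (T.map (· ^ 2)).sum) :=
        mul_le_mul_of_nonneg_left ih (by linarith)
      have key : (T.length:ℝ) * ((a + T.sum)^2)
          ≤ (T.length:ℝ) * (((T.length:ℝ)+1) * (a^2 + (T.map (· ^ 2)).sum)) := by
        nlinarith [sq_nonneg ((T.length:ℝ)*a - T.sum)]
      have := le_of_mul_le_mul_left key (by linarith : (0:ℝ) < (T.length:ℝ))
      linarith

lemma list_normSq_sum (L : List ℂ) :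
    Complex.normSq L.sum ≤ L.length * (L.map Complex.normSq).sum := by
  have h1 : ‖L.sum‖ ≤ (L.map (‖·‖)).sum := by
    induction L with
    | nil => simp
    | cons a T ih =>
      simp only [List.sum_cons, List.map_cons]
      exact le_trans (norm_add_le _ _) (by linarith)
  have h2 : Complex.normSq L.sum = ‖L.sum‖ ^ 2 := (Complex.sq_norm _).symm
  calc Complex.normSq L.sum = ‖L.sum‖ ^ 2 := h2
    _ ≤ (L.map (‖·‖)).sum ^ 2 := by
        apply pow_le_pow_left₀ (norm_nonneg _) h1
    _ ≤ (L.map (‖·‖)).length * ((L.map (‖·‖)).map (· ^ 2)).sum := list_sq_sum _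
    _ = L.length * (L.map Complex.normSq).sum := by
        rw [List.length_map, List.map_map]
        congr 2
        apply List.map_congr_left
        intro a _
        exact Complex.sq_norm a

lemma list_re_sum (B : ℂ) (L : List ℂ) :
    (B * L.sum).re = (L.map (fun t => (B * t).re)).sum := by
  induction L with
  | nil => simp
  | cons a T ih => simp [mul_add, Complex.add_re, ih]

lemma logderiv_list (L : List ℂ) (η : ℂ) (h : ∀ a ∈ L, η ≠ a) :
    eval η (derivative (L.map (fun a => X - C a)).prod)
      = eval η (L.map (fun a => X - C a)).prod * (L.map (fun a => (η - a)⁻¹)).sum := by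
  induction L with
  | nil => simp
  | cons a T ih =>
    have ha : η - a ≠ 0 := sub_ne_zero.mpr (h a List.mem_cons_self)
    have ihT := ih (fun b hb => h b (List.mem_cons_of_mem _ hb))
    simp only [List.map_cons, List.prod_cons, derivative_mul, derivative_sub, derivative_X,
      derivative_C, sub_zero, one_mul, eval_add, eval_mul, eval_sub, eval_X, eval_C,
      List.sum_cons, ihT]
    field_simp

-- the quadratic defining function
noncomputable def QF (α γ : ℝ) (β : ℂ) (u : ℂ) : ℝ := α * normSq u + (β * u).re + γ

-- the inverted quadratic
noncomputable def PSI (α γ : ℝ) (β : ℂ) (η t : ℂ) : ℝ :=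
  QF α γ β η * normSq t - ((2 * (α:ℂ) * η + starRingEnd ℂ β) * t).re + α

lemma psi_eq (α γ : ℝ) (β : ℂ) (η t : ℂ) (ht : t ≠ 0) :
    PSI α γ β η t = normSq t * QF α γ β (η - t⁻¹) := by
  have hns : normSq t ≠ 0 := normSq_pos.mpr ht |>.ne'
  have hns' : t.re * t.re + t.im * t.im ≠ 0 := by
    simpa [normSq_apply] using hns
  simp only [PSI, QF, normSq_apply, Complex.sub_re, Complex.sub_im, Complex.mul_re,
    Complex.mul_im, Complex.inv_re, Complex.inv_im, Complex.add_re, Complex.add_im,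
    Complex.ofReal_re, Complex.ofReal_im, Complex.normSq_apply,
    Complex.conj_re, Complex.conj_im, Complex.re_ofNat, Complex.im_ofNat]
  have hns'' : t.re ^ 2 + t.im ^ 2 ≠ 0 := by simpa [sq] using hns'
  field_simp
  ring

lemma lag (α γ : ℝ) (β : ℂ) (hα : 0 ≤ α) (D : Set ℂ)
    (hD : (∀ u, u ∈ D ↔ QF α γ β u < 0) ∨ (∀ u, u ∈ D ↔ QF α γ β u ≤ 0))
    (κ : ℕ) (hκ : 0 < κ) (f : Polynomial ℂ) (hdeg : f.natDegree ≤ κ)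
    (η v : ℂ) (hη : η ∈ D) (hv : v ∈ D) :
    ∃ ζ ∈ D, f.eval ζ = f.eval η + (v - η) * f.derivative.eval η / κ := by
  by_contra hcon
  push_neg at hcon
  set w : ℂ := f.eval η + (v - η) * f.derivative.eval η / κ with hw
  set g : Polynomial ℂ := f - C w with hgdef
  have hknz : (κ : ℂ) ≠ 0 := Nat.cast_ne_zero.mpr hκ.ne'
  have hgD : ∀ ζ ∈ D, g.eval ζ ≠ 0 := by
    intro ζ hζ
    have := hcon ζ hζ
    simpa [hgdef, sub_eq_zero] using this
  have hgη : g.eval η ≠ 0 := hgD η hη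
  have hgd : g.derivative = f.derivative := by simp [hgdef]
  have hrel : g.eval η = (η - v) * g.derivative.eval η / κ := by
    rw [hgd, hgdef]
    simp only [eval_sub, eval_C, hw]
    field_simp
    ring
  have hg'η : g.derivative.eval η ≠ 0 := by
    intro h0
    rw [h0] at hrel
    simp at hrel
    exact hgη hrel
  have hvη : v ≠ η := by
    rintro rfl
    simp at hrel
    exact hgη hrel
  have hg0 : g ≠ 0 := fun h => hgη (by simp [h])
  -- factor g over its roots
  set L : List ℂ := g.roots.toList with hL
  have hLcard : L.length ≤ κ := by
    have h1 : g.roots.card ≤ g.natDegree := card_roots' g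
    have h2 : g.natDegree ≤ κ := by
      refine le_trans (natDegree_sub_le _ _) ?_
      simp [hdeg]
    simpa [hL, Multiset.length_toList] using le_trans h1 h2
  have hLprod : g = C g.leadingCoeff * (L.map fun a => X - C a).prod := by
    have h0 := Splits.eq_prod_roots (IsAlgClosed.splits g)
    rw [← Multiset.coe_toList g.roots, Multiset.map_coe, Multiset.prod_coe] at h0
    rw [← hL] at h0
    exact h0
  have hroots : ∀ a ∈ L, a ∉ D ∧ η ≠ a := by
    intro a ha
    have hra : g.eval a = 0 := by
      have : a ∈ g.roots := by rwa [hL, Multiset.mem_toList] at ha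
      exact (mem_roots hg0).mp this
    constructor
    · intro haD; exact hgD a haD hra
    · rintro rfl; exact hgη hra
  -- log derivative
  set S : ℂ := (L.map fun a => (η - a)⁻¹).sum with hS
  have hld : g.derivative.eval η = g.eval η * S := by
    have h1 := logderiv_list L η (fun a ha => (hroots a ha).2)
    rw [hLprod]
    simp only [derivative_mul, derivative_C, zero_mul, zero_add, eval_mul, eval_C, h1, hS]
    ring
  -- set up the inversion points
  have hηv : η - v ≠ 0 := sub_ne_zero.mpr hvη.symm
  set μ : ℂ := (η - v)⁻¹ with hμdef
  have hμne : μ ≠ 0 := inv_ne_zero hηv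
  have hSμ : S = (κ : ℂ) * μ := by
    have h1 : η - v = (κ : ℂ) * g.eval η / g.derivative.eval η := by
      rw [eq_div_iff hg'η]
      field_simp at hrel
      linear_combination (-1 : ℂ) * hrel
    have h2 : S = g.derivative.eval η / g.eval η := by
      rw [hld]; field_simp
    rw [h2, hμdef, h1]
    field_simp
  set B : ℂ := 2 * (α : ℂ) * η + starRingEnd ℂ β with hB
  set Λ : List ℂ := L.map fun a => (η - a)⁻¹ with hΛ
  have hΛsum : Λ.sum = S := rfl
  have hΛlen : Λ.length = L.length := List.length_map _
  set NN : ℝ := (Λ.map Complex.normSq).sum with hNN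
  set RR : ℝ := (Λ.map fun t => (B * t).re).sum with hRR
  have hN0 : 0 ≤ NN := List.sum_nonneg (by
    intro u hu; obtain ⟨t, _, rfl⟩ := List.mem_map.mp hu; exact normSq_nonneg t)
  have hκR : (0:ℝ) < (κ:ℝ) := by exact_mod_cast hκ
  have hmmκ : (Λ.length : ℝ) ≤ (κ:ℝ) := by
    rw [hΛlen]; exact_mod_cast hLcard
  -- Cauchy-Schwarz
  have hCS : Complex.normSq S ≤ Λ.length * NN := by
    rw [← hΛsum]; exact list_normSq_sum Λ
  have hnsS : Complex.normSq S = (κ:ℝ)^2 * Complex.normSq μ := by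
    rw [hSμ, map_mul]
    congr 1
    rw [← Complex.ofReal_natCast, Complex.normSq_ofReal]
    ring
  -- linearity of the re-part
  have hre : (B * S).re = RR := by rw [hRR, ← hΛsum, list_re_sum]
  have hreμ : RR = (κ:ℝ) * (B * μ).re := by
    rw [← hre, hSμ]
    have : B * ((κ:ℂ) * μ) = (κ:ℂ) * (B * μ) := by ring
    rw [this]
    simp [Complex.mul_re]
  -- sum of PSI values over the list
  have hsplit : (Λ.map (PSI α γ β η)).sum = QF α γ β η * NN - RR + Λ.length * α := by
    rw [hNN, hRR]
    have : ∀ (T : List ℂ), (T.map (PSI α γ β η)).sum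
        = QF α γ β η * (T.map Complex.normSq).sum
          - (T.map fun t => (B * t).re).sum + T.length * α := by
      intro T
      induction T with
      | nil => simp
      | cons t T ihh =>
        simp only [List.map_cons, List.sum_cons, List.length_cons]
        rw [ihh]
        simp only [PSI, hB]
        push_cast
        ring
    exact this Λ
  have hQη : QF α γ β η ≤ 0 := by
    rcases hD with h | h
    · exact le_of_lt ((h η).mp hη)
    · exact (h η).mp hη
  -- concavity inequality
  have h1 : (0:ℝ) ≤ (κ:ℝ) * NN - (κ:ℝ)^2 * Complex.normSq μ := by
    have := mul_nonneg (sub_nonneg.mpr hmmκ) hN0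
    nlinarith [hCS, hnsS]
  have h2 : (0:ℝ) ≤ QF α γ β η * ((κ:ℝ)^2 * Complex.normSq μ - (κ:ℝ) * NN) := by
    have hnn := mul_nonneg (neg_nonneg.mpr hQη)
      (neg_nonneg.mpr (show (κ:ℝ)^2 * Complex.normSq μ - (κ:ℝ) * NN ≤ 0 by linarith))
    nlinarith [hnn]
  have h3 : QF α γ β η * NN ≤ (κ:ℝ) * (QF α γ β η * Complex.normSq μ) := by
    nlinarith [h2, hκR]
  have hmain : (Λ.map (PSI α γ β η)).sum ≤ (κ:ℝ) * PSI α γ β η μ := by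
    rw [hsplit]
    simp only [PSI]
    rw [hreμ]
    have h4 : (Λ.length : ℝ) * α ≤ (κ:ℝ) * α := mul_le_mul_of_nonneg_right hmmκ hα
    nlinarith [h3]
  -- evaluate PSI at μ and at the root points
  have hpsiμ : PSI α γ β η μ = Complex.normSq μ * QF α γ β v := by
    rw [psi_eq _ _ _ _ _ hμne]
    congr 2
    rw [hμdef, inv_inv]
    ring
  have hpsiroot : ∀ a ∈ L, PSI α γ β η ((η - a)⁻¹)
      = Complex.normSq ((η - a)⁻¹) * QF α γ β a := by
    intro a ha
    have hne : (η - a) ≠ 0 := sub_ne_zero.mpr (hroots a ha).2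
    rw [psi_eq _ _ _ _ _ (inv_ne_zero hne)]
    congr 2
    rw [inv_inv]
    ring
  have hΛsum_eq : (Λ.map (PSI α γ β η)).sum
      = (L.map fun a => Complex.normSq ((η - a)⁻¹) * QF α γ β a).sum := by
    rw [hΛ, List.map_map]
    congr 1
    apply List.map_congr_left
    intro a ha
    exact hpsiroot a ha
  have hLne : L ≠ [] := by
    intro h0
    have : S = 0 := by rw [hS, hΛ, h0]; simp
    rw [hSμ] at this
    exact hμne (by
      have := mul_eq_zero.mp this
      rcases this with h | h
      · exact absurd h hknz
      · exact h)
  rcases hD with hDo | hDc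
  · -- open case
    have hQv : QF α γ β v < 0 := (hDo v).mp hv
    have hμpos : 0 < Complex.normSq μ := normSq_pos.mpr hμne
    have hlt : (κ:ℝ) * PSI α γ β η μ < 0 := by
      rw [hpsiμ]
      exact mul_neg_of_pos_of_neg hκR (mul_neg_of_pos_of_neg hμpos hQv)
    have hge : 0 ≤ (Λ.map (PSI α γ β η)).sum := by
      rw [hΛsum_eq]
      apply List.sum_nonneg
      intro u hu
      obtain ⟨a, ha, rfl⟩ := List.mem_map.mp hu
      have haD : a ∉ D := (hroots a ha).1
      have : 0 ≤ QF α γ β a := by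
        by_contra hq
        exact haD ((hDo a).mpr (lt_of_not_ge hq))
      exact mul_nonneg (normSq_nonneg _) this
    linarith
  · -- closed case
    have hQv : QF α γ β v ≤ 0 := (hDc v).mp hv
    have hle : (κ:ℝ) * PSI α γ β η μ ≤ 0 := by
      rw [hpsiμ]
      exact mul_nonpos_of_nonneg_of_nonpos hκR.le
        (mul_nonpos_of_nonneg_of_nonpos (normSq_nonneg _) hQv)
    have hgt : 0 < (Λ.map (PSI α γ β η)).sum := by
      rw [hΛsum_eq]
      apply List.sum_pos
      · intro u hu
        obtain ⟨a, ha, rfl⟩ := List.mem_map.mp hu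
        have haD : a ∉ D := (hroots a ha).1
        have hq : 0 < QF α γ β a := by
          by_contra hq
          exact haD ((hDc a).mpr (le_of_not_gt hq))
        have hne : (η - a) ≠ 0 := sub_ne_zero.mpr (hroots a ha).2
        exact mul_pos (normSq_pos.mpr (inv_ne_zero hne)) hq
      · simpa using hLne
    linarith

theorem gws (α γ : ℝ) (β : ℂ) (hα : 0 ≤ α) (D : Set ℂ) (hne : D.Nonempty)
    (hD : (∀ u, u ∈ D ↔ QF α γ β u < 0) ∨ (∀ u, u ∈ D ↔ QF α γ β u ≤ 0)) :
    ∀ (κ : ℕ) (c : ℕ → ℂ) (z : Fin κ → ℂ), (∀ i, z i ∈ D) →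
    ∃ ζ ∈ D, ∑ j ∈ Finset.range (κ+1), ((κ.choose j : ℂ))⁻¹ * esymm κ j z * c j
      = ∑ j ∈ Finset.range (κ+1), c j * ζ ^ j := by
  intro κ
  induction κ with
  | zero =>
    intro c z _
    obtain ⟨ζ0, hζ0⟩ := hne
    exact ⟨ζ0, hζ0, by simp [esymm_zero]⟩
  | succ κ ih =>
    intro c z hz
    set w : ℂ := z (Fin.last κ) with hwdef
    set z' : Fin κ → ℂ := z ∘ Fin.castSucc with hz'def
    set d : ℕ → ℂ := fun j => (κ.choose j : ℂ) *
      ((((κ+1).choose j : ℂ))⁻¹ * c j + (((κ+1).choose (j+1) : ℂ))⁻¹ * c (j+1) * w)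
      with hddef
    obtain ⟨η, hη, heq⟩ := ih d z' (fun i => hz _)
    have hκ1ne : ((κ:ℂ)+1) ≠ 0 := Nat.cast_add_one_ne_zero κ
    -- the diagonal polynomial
    set f : Polynomial ℂ := ∑ j ∈ Finset.range (κ+2), C (c j) * X ^ j with hfdef
    have hdeg : f.natDegree ≤ κ + 1 := by
      apply Polynomial.natDegree_sum_le_of_forall_le
      intro j hj
      refine le_trans (natDegree_C_mul_le _ _) ?_
      simpa [natDegree_X_pow] using Nat.lt_succ_iff.mp (mem_range.mp hj)
    have heval : ∀ ζ : ℂ, f.eval ζ = ∑ j ∈ Finset.range (κ+2), c j * ζ ^ j := by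
      intro ζ; simp [hfdef, eval_finset_sum]
    have hder : f.derivative.eval η
        = ∑ j ∈ Finset.range (κ+2), c j * j * η ^ (j-1) := by
      rw [hfdef, derivative_sum]
      rw [eval_finset_sum]
      apply Finset.sum_congr rfl
      intro j _
      rw [derivative_C_mul_X_pow]
      simp
    obtain ⟨ζ, hζ, hlag⟩ := lag α γ β hα D hD (κ+1) (Nat.succ_pos κ) f hdeg η w hη
      (hz (Fin.last κ))
    refine ⟨ζ, hζ, ?_⟩
    -- identity 1 : collapse last variable
    have hid1 : ∑ j ∈ Finset.range (κ+2), (((κ+1).choose j : ℂ))⁻¹ * esymm (κ+1) j z * c j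
        = ∑ j ∈ Finset.range (κ+1),
            ((((κ+1).choose j : ℂ))⁻¹ * c j
              + (((κ+1).choose (j+1) : ℂ))⁻¹ * c (j+1) * w) * esymm κ j z' := by
      rw [Finset.sum_range_succ' _ (κ+1)]
      have hrec : ∀ j ∈ Finset.range (κ+1),
          (((κ+1).choose (j+1) : ℂ))⁻¹ * esymm (κ+1) (j+1) z * c (j+1)
            = (((κ+1).choose (j+1) : ℂ))⁻¹ * c (j+1) * esymm κ (j+1) z'
              + (((κ+1).choose (j+1) : ℂ))⁻¹ * c (j+1) * w * esymm κ j z' := by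
        intro j _
        rw [esymm_succ κ j z, ← hwdef, ← hz'def]
        ring
      rw [Finset.sum_congr rfl hrec, Finset.sum_add_distrib]
      have hshift : ∑ j ∈ Finset.range (κ+1),
          (((κ+1).choose (j+1) : ℂ))⁻¹ * c (j+1) * esymm κ (j+1) z'
          = ∑ j ∈ Finset.range (κ+1),
              (((κ+1).choose j : ℂ))⁻¹ * c j * esymm κ j z'
            - (((κ+1).choose 0 : ℂ))⁻¹ * c 0 * esymm κ 0 z' := by
        have h1 : ∑ j ∈ Finset.range (κ+2),
            (((κ+1).choose j : ℂ))⁻¹ * c j * esymm κ j z'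
            = ∑ j ∈ Finset.range (κ+1),
                (((κ+1).choose (j+1) : ℂ))⁻¹ * c (j+1) * esymm κ (j+1) z'
              + (((κ+1).choose 0 : ℂ))⁻¹ * c 0 * esymm κ 0 z' :=
          Finset.sum_range_succ' _ (κ+1)
        have h2 : ∑ j ∈ Finset.range (κ+2),
            (((κ+1).choose j : ℂ))⁻¹ * c j * esymm κ j z'
            = ∑ j ∈ Finset.range (κ+1),
                (((κ+1).choose j : ℂ))⁻¹ * c j * esymm κ j z' := by
          rw [Finset.sum_range_succ]
          rw [esymm_of_lt (Nat.lt_succ_self κ) z']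
          ring
        rw [← h2, h1]
        ring
      rw [hshift]
      simp only [esymm_zero, Nat.choose_zero_right, Nat.cast_one, inv_one, one_mul, mul_one]
      rw [Finset.sum_congr rfl (fun j _ => by ring :
        ∀ j ∈ Finset.range (κ+1),
          ((((κ+1).choose j : ℂ))⁻¹ * c j + (((κ+1).choose (j+1) : ℂ))⁻¹ * c (j+1) * w)
            * esymm κ j z'
          = (((κ+1).choose j : ℂ))⁻¹ * c j * esymm κ j z'
            + (((κ+1).choose (j+1) : ℂ))⁻¹ * c (j+1) * w * esymm κ j z')]
      rw [Finset.sum_add_distrib]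
      ring
    -- identity : RHS of hid1 equals ∑ d j η^j via heq
    have hid1' : ∑ j ∈ Finset.range (κ+1),
        ((((κ+1).choose j : ℂ))⁻¹ * c j
          + (((κ+1).choose (j+1) : ℂ))⁻¹ * c (j+1) * w) * esymm κ j z'
        = ∑ j ∈ Finset.range (κ+1), d j * η ^ j := by
      rw [← heq]
      apply Finset.sum_congr rfl
      intro j hj
      have hjκ : j ≤ κ := Nat.lt_succ_iff.mp (mem_range.mp hj)
      have hchnz : ((κ.choose j : ℂ)) ≠ 0 :=
        Nat.cast_ne_zero.mpr (Nat.choose_pos hjκ).ne'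
      rw [hddef]
      field_simp
    -- identity 2 : ∑ d j η^j is the Laguerre combination
    have hid2 : ∑ j ∈ Finset.range (κ+1), d j * η ^ j
        = f.eval η + (w - η) * f.derivative.eval η / ((κ:ℂ)+1) := by
      have hd : ∀ j ∈ Finset.range (κ+1), ((κ:ℂ)+1) * (d j * η ^ j)
          = (((κ:ℂ)+1) - j) * c j * η ^ j + ((j:ℂ)+1) * c (j+1) * w * η ^ j := by
        intro j hj
        have hjκ : j ≤ κ := Nat.lt_succ_iff.mp (mem_range.mp hj)
        have hnz1 : (((κ+1).choose j : ℂ)) ≠ 0 :=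
          Nat.cast_ne_zero.mpr (Nat.choose_pos (by omega)).ne'
        have hnz2 : (((κ+1).choose (j+1) : ℂ)) ≠ 0 :=
          Nat.cast_ne_zero.mpr (Nat.choose_pos (by omega)).ne'
        have hint1 : (κ.choose j : ℂ) * ((κ:ℂ)+1)
            = ((κ+1).choose j : ℂ) * ((κ:ℂ)+1 - j) := by
          have h := Nat.choose_mul_succ_eq κ j
          have h' : ((κ.choose j * (κ+1) : ℕ) : ℂ) = (((κ+1).choose j * (κ+1-j) : ℕ) : ℂ) :=
            congrArg (fun m : ℕ => (m : ℂ)) h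
          push_cast [Nat.cast_sub (show j ≤ κ+1 by omega)] at h'
          linear_combination h'
        have hint2 : ((κ:ℂ)+1) * (κ.choose j : ℂ)
            = ((κ+1).choose (j+1) : ℂ) * ((j:ℂ)+1) := by
          have h := Nat.add_one_mul_choose_eq κ j
          have h' : (((κ+1) * κ.choose j : ℕ) : ℂ) = (((κ+1).choose (j+1) * (j+1) : ℕ) : ℂ) :=
            congrArg (fun m : ℕ => (m : ℂ)) h
          push_cast at h'
          linear_combination h'
        have e1 : (κ.choose j : ℂ) * (((κ+1).choose j : ℂ))⁻¹
            = (((κ:ℂ)+1) - j) / ((κ:ℂ)+1) := by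
          field_simp
          linear_combination hint1
        have e2 : (κ.choose j : ℂ) * (((κ+1).choose (j+1) : ℂ))⁻¹
            = ((j:ℂ)+1) / ((κ:ℂ)+1) := by
          field_simp
          linear_combination hint2
        have e1' : (κ.choose j : ℂ) * (((κ+1).choose j : ℂ))⁻¹ * ((κ:ℂ)+1)
            = ((κ:ℂ)+1) - j := by
          rw [e1]; field_simp
        have e2' : (κ.choose j : ℂ) * (((κ+1).choose (j+1) : ℂ))⁻¹ * ((κ:ℂ)+1)
            = ((j:ℂ)+1) := by
          rw [e2]; field_simp
        simp only [hddef]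
        linear_combination (η^j * c j) * e1' + (η^j * c (j+1) * w) * e2'
      -- now assemble the sum identity
      have hsum : ∑ j ∈ Finset.range (κ+1), d j * η ^ j
          = (∑ j ∈ Finset.range (κ+1),
              ((((κ:ℂ)+1) - j) * c j * η ^ j + ((j:ℂ)+1) * c (j+1) * w * η ^ j))
            / ((κ:ℂ)+1) := by
        rw [Finset.sum_div]
        apply Finset.sum_congr rfl
        intro j hj
        rw [eq_div_iff hκ1ne]
        have := hd j hj
        linear_combination this
      rw [hsum, Finset.sum_add_distrib]
      -- T1
      have hT1 : ∑ j ∈ Finset.range (κ+1), (((κ:ℂ)+1) - j) * c j * η ^ j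
          = ((κ:ℂ)+1) * f.eval η - η * f.derivative.eval η := by
        have hV : η * f.derivative.eval η
            = ∑ j ∈ Finset.range (κ+2), c j * (j:ℂ) * η ^ j := by
          rw [hder, Finset.mul_sum]
          apply Finset.sum_congr rfl
          intro j _
          rcases j with _ | j
          · simp
          · simp only [Nat.add_sub_cancel, Nat.cast_add, Nat.cast_one]
            ring
        have hfull : ∑ j ∈ Finset.range (κ+2), (((κ:ℂ)+1) - j) * c j * η ^ j
            = ∑ j ∈ Finset.range (κ+1), (((κ:ℂ)+1) - j) * c j * η ^ j := by
          rw [Finset.sum_range_succ]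
          push_cast
          ring
        rw [← hfull, heval η, hV, Finset.mul_sum, ← Finset.sum_sub_distrib]
        apply Finset.sum_congr rfl
        intro j _
        ring
      -- T2
      have hT2 : ∑ j ∈ Finset.range (κ+1), ((j:ℂ)+1) * c (j+1) * w * η ^ j
          = w * f.derivative.eval η := by
        rw [hder, Finset.mul_sum,
          Finset.sum_range_succ' (fun j => w * (c j * (j:ℂ) * η ^ (j-1))) (κ+1)]
        simp only [Nat.cast_zero, mul_zero, zero_mul, add_zero, Nat.add_sub_cancel]
        apply Finset.sum_congr rfl
        intro j _
        push_cast
        ring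
      rw [hT1, hT2]
      push_cast
      field_simp
      ring
    have hlagC : eval ζ f = eval η f + (w - η) * eval η (derivative f) / ((κ:ℂ)+1) := by
      rw [hlag]; norm_cast
    rw [hid1, hid1', hid2, ← hlagC, heval]

lemma rep (D : Set ℂ) (hD : IsDiscOrHalfPlane D) :
    D.Nonempty ∧ ∃ (α γ : ℝ) (β : ℂ), 0 ≤ α ∧
      ((∀ u, u ∈ D ↔ QF α γ β u < 0) ∨ (∀ u, u ∈ D ↔ QF α γ β u ≤ 0)) := by
  rcases hD with ⟨c, r, hr, hball⟩ | ⟨w, hw, t, hhp⟩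
  · have hQ : ∀ u : ℂ, QF 1 (normSq c - r^2) (-2 * (starRingEnd ℂ) c) u
        = normSq (u - c) - r^2 := by
      intro u
      have := Complex.normSq_sub u c
      simp only [QF]
      rw [this]
      simp [Complex.mul_re]
      ring
    have hmem : ∀ u : ℂ, (dist u c < r ↔ QF 1 (normSq c - r^2) (-2 * (starRingEnd ℂ) c) u < 0)
        ∧ (dist u c ≤ r ↔ QF 1 (normSq c - r^2) (-2 * (starRingEnd ℂ) c) u ≤ 0) := by
      intro u
      rw [hQ u, Complex.dist_eq, ← Complex.sq_norm]
      have h0 : 0 ≤ ‖u - c‖ := norm_nonneg _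
      constructor
      · constructor
        · intro h; nlinarith
        · intro h; nlinarith
      · constructor
        · intro h; nlinarith
        · intro h; nlinarith
    rcases hball with rfl | rfl
    · refine ⟨⟨c, Metric.mem_ball_self hr⟩, 1, normSq c - r^2, -2 * (starRingEnd ℂ) c,
        zero_le_one, Or.inl ?_⟩
      intro u
      rw [Metric.mem_ball]
      exact (hmem u).1
    · refine ⟨⟨c, Metric.mem_closedBall_self hr.le⟩, 1, normSq c - r^2,
        -2 * (starRingEnd ℂ) c, zero_le_one, Or.inr ?_⟩
      intro u
      rw [Metric.mem_closedBall]
      exact (hmem u).2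
  · have hwit : (w * (((t:ℂ) - 1) / w)).re = t - 1 := by
      rw [mul_div_cancel₀ _ hw]
      simp
    have hQ : ∀ u : ℂ, QF 0 (-t) w u = (w * u).re - t := by
      intro u; simp [QF]; ring
    rcases hhp with rfl | rfl
    · refine ⟨⟨((t:ℂ) - 1) / w, by simp only [Set.mem_setOf_eq, hwit]; linarith⟩,
        0, -t, w, le_refl 0, Or.inl ?_⟩
      intro u
      rw [hQ u]
      simp only [Set.mem_setOf_eq]
      constructor <;> intro h <;> linarith
    · refine ⟨⟨((t:ℂ) - 1) / w, by simp only [Set.mem_setOf_eq, hwit]; linarith⟩,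
        0, -t, w, le_refl 0, Or.inr ?_⟩
      intro u
      rw [hQ u]
      simp only [Set.mem_setOf_eq]
      constructor <;> intro h <;> linarith

lemma dot_sum_mulVec {n : ℕ} (y x : Fin n → ℂ) (s : Finset ℕ)
    (A : ℕ → Matrix (Fin n) (Fin n) ℂ) :
    dotProduct (star y) ((∑ j ∈ s, A j).mulVec x)
      = ∑ j ∈ s, dotProduct (star y) ((A j).mulVec x) := by
  classical
  induction s using Finset.induction_on with
  | empty => simp
  | insert _ _ hnotmem ih =>
    rw [Finset.sum_insert hnotmem, Finset.sum_insert hnotmem, Matrix.add_mulVec,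
      dotProduct_add, ih]

theorem stmt14 {n : ℕ} (P : Matrix (Fin n) (Fin n) (Polynomial ℂ)) (D : Set ℂ)
    (hD : IsDiscOrHalfPlane D) (κ : ℕ)
    (hκ : ∀ i k : Fin n, (P i k).natDegree ≤ κ)
    (hP : Hyperstable (fun μ => P.map (Polynomial.eval μ)) D)
    (p : Fin κ → Polynomial ℂ) :
    Hyperstable (fun μ => polarize κ P (fun i => (p i).eval μ))
      (⋂ i : Fin κ, (fun μ => (p i).eval μ) ⁻¹' D) := by
  obtain ⟨hne, α, γ, β, hα, hrep⟩ := rep D hD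
  intro x hx
  obtain ⟨y, hy0, hy⟩ := hP x hx
  refine ⟨y, hy0, ?_⟩
  intro μ hμ
  set z : Fin κ → ℂ := fun i => (p i).eval μ with hzdef
  have hzD : ∀ i, z i ∈ D := fun i => Set.mem_iInter.mp hμ i
  set c : ℕ → ℂ := fun j =>
    dotProduct (star y) ((Matrix.of fun i k => (P i k).coeff j).mulVec x) with hcdef
  have hE2 : dotProduct (star y) ((polarize κ P z).mulVec x)
      = ∑ j ∈ Finset.range (κ+1), ((κ.choose j : ℂ))⁻¹ * esymm κ j z * c j := by
    rw [polarize, dot_sum_mulVec]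
    apply Finset.sum_congr rfl
    intro j _
    rw [Matrix.smul_mulVec, dotProduct_smul, smul_eq_mul, hcdef]
  have hE1 : ∀ ζ : ℂ, dotProduct (star y) ((P.map (Polynomial.eval ζ)).mulVec x)
      = ∑ j ∈ Finset.range (κ+1), c j * ζ ^ j := by
    intro ζ
    have hmat : P.map (Polynomial.eval ζ)
        = ∑ j ∈ Finset.range (κ+1),
            (ζ^j • (Matrix.of fun i k => (P i k).coeff j) : Matrix (Fin n) (Fin n) ℂ) := by
      ext i k
      rw [Matrix.map_apply, Polynomial.eval_eq_sum_range' (Nat.lt_succ_of_le (hκ i k))]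
      rw [Matrix.sum_apply]
      apply Finset.sum_congr rfl
      intro j _
      simp [Matrix.smul_apply, mul_comm]
    rw [hmat, dot_sum_mulVec]
    apply Finset.sum_congr rfl
    intro j _
    rw [Matrix.smul_mulVec, dotProduct_smul, smul_eq_mul, hcdef]
    ring
  obtain ⟨ζ, hζ, hgws⟩ := gws α γ β hα D hne hrep κ c z hzD
  have hyζ := hy ζ hζ
  rw [hE2, hgws, ← hE1 ζ]
  exact hyζ
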